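/- Discrete maximum principle for the upwind scheme with feedback boundary condition: assume that 0 < (Δt/Δx)·Λ_i(v) ≤ 1 for every v ∈ M_δ(0) and every i = 1,…,m, that 0 < κ_i ≤ 1 for every i, that |u^{(i),0}_{j,k}| ≤ δ for all i = 1,…,m, j = 1,…,M, k = 0,…,K, and that u^{(i),0}_{0,k} = κ_i·u^{(i),0}_{M,k}. Then the values produced by the scheme satisfy |u^{(i),n}_{j,k}| ≤ δ for all i = 1,…,m, j = 0,…,M, k = 0,…,K and all n = 0,…,N. -/
import Mathlib


/-- Discrete maximum principle for the upwind scheme with feedback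
boundary condition (Proposition 2 of the paper).  Here `u i n j k` denotes
`u^{(i),n}_{j,k}`, the spatial mesh is `Δx = 1/M` with nodes `x_j = j·Δx`, and the
scheme is the upwind scheme with boundary update `u^{(i),n+1}_{0,k} = κ_i·u^{(i),n+1}_{M,k}`. -/
theorem discrete_maximum_principle_upwind_feedback
    (m M K N : ℕ) (hm : 1 ≤ m) (hM : 2 ≤ M)
    (Δx Δt δ : ℝ) (hΔx : Δx = 1 / M) (hΔt : 0 < Δt) (hδ : 0 < δ)
    (Λ : Fin m → (Fin m → ℝ) → ℝ) (κ : Fin m → ℝ)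
    (u : Fin m → ℕ → ℕ → ℕ → ℝ)
    -- (Δt/Δx)·Λ_i(v) ∈ (0,1] for every v ∈ M_δ(0) and every i
    (hCFL : ∀ v : Fin m → ℝ, (∀ i, |v i| ≤ δ) →
      ∀ i, 0 < Δt / Δx * Λ i v ∧ Δt / Δx * Λ i v ≤ 1)
    -- 0 < κ_i ≤ 1
    (hκ : ∀ i, 0 < κ i ∧ κ i ≤ 1)
    -- |u^{(i),0}_{j,k}| ≤ δ for j = 1,…,M, k = 0,…,K
    (hinit : ∀ i, ∀ j, 1 ≤ j → j ≤ M → ∀ k, k ≤ K → |u i 0 j k| ≤ δ)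
    -- u^{(i),0}_{0,k} = κ_i·u^{(i),0}_{M,k}
    (hbc0 : ∀ i, ∀ k, k ≤ K → u i 0 0 k = κ i * u i 0 M k)
    -- the upwind scheme with feedback boundary update
    (hscheme : ∀ n, n < N → ∀ i, ∀ k, k ≤ K →
      (∀ j, 1 ≤ j → j ≤ M →
        u i (n+1) j k =
          u i n j k - Δt / Δx * Λ i (fun l => u l n j k) * (u i n j k - u i n (j-1) k)) ∧
      u i (n+1) 0 k = κ i * u i (n+1) M k) :
    ∀ n, n ≤ N → ∀ i, ∀ j, j ≤ M → ∀ k, k ≤ K → |u i n j k| ≤ δ := by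
  intro n
  induction n with
  | zero =>
    intro _ i j hj k hk
    rcases Nat.eq_zero_or_pos j with rfl | hj1
    · rw [hbc0 i k hk]
      have h1 := hinit i M (by omega) le_rfl k hk
      have hκi := hκ i
      rw [abs_mul, abs_of_pos hκi.1]
      calc κ i * |u i 0 M k| ≤ 1 * δ :=
            mul_le_mul hκi.2 h1 (abs_nonneg _) zero_le_one
        _ = δ := one_mul δ
    · exact hinit i j hj1 hj k hk
  | succ n ih =>
    intro hn i j hj k hk
    have hn' : n < N := hn
    have ihall : ∀ i j, j ≤ M → ∀ k, k ≤ K → |u i n j k| ≤ δ := ih (le_of_lt hn')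
    have hint : ∀ i j, 1 ≤ j → j ≤ M → |u i (n+1) j k| ≤ δ := by
      intro i j hj1 hjM
      have hs := (hscheme n hn' i k hk).1 j hj1 hjM
      have hc := hCFL (fun l => u l n j k) (fun l => ihall l j hjM k hk) i
      set lam := Δt / Δx * Λ i (fun l => u l n j k) with hlam
      rw [hs]
      have h1 : |u i n j k| ≤ δ := ihall i j hjM k hk
      have h2 : |u i n (j-1) k| ≤ δ := ihall i (j-1) (by omega) k hk
      have heq : u i n j k - lam * (u i n j k - u i n (j-1) k)
          = (1 - lam) * u i n j k + lam * u i n (j-1) k := by ring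
      rw [heq]
      calc |(1-lam)*u i n j k + lam * u i n (j-1) k|
          ≤ |(1-lam)*u i n j k| + |lam * u i n (j-1) k| := abs_add_le _ _
        _ = (1-lam)*|u i n j k| + lam*|u i n (j-1) k| := by
            rw [abs_mul, abs_mul, abs_of_nonneg (by linarith [hc.2]), abs_of_pos hc.1]
        _ ≤ (1-lam)*δ + lam*δ := add_le_add
            (mul_le_mul_of_nonneg_left h1 (by linarith [hc.2]))
            (mul_le_mul_of_nonneg_left h2 (le_of_lt hc.1))
        _ = δ := by ring
    rcases Nat.eq_zero_or_pos j with rfl | hj1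
    · rw [(hscheme n hn' i k hk).2]
      have h1 := hint i M (by omega) le_rfl
      have hκi := hκ i
      rw [abs_mul, abs_of_pos hκi.1]
      calc κ i * |u i (n+1) M k| ≤ 1 * δ :=
            mul_le_mul hκi.2 h1 (abs_nonneg _) zero_le_one
        _ = δ := one_mul δ
    · exact hint i j hj1 hj
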